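/- For every m ≥ 2, the semigroup S_m has no invariant cone: there is no proper cone K ⊆ ℝ^{3m} with A K ⊆ K for every A ∈ S_m. -/

import Mathlib

open Matrix

open scoped Classical

/-- A complex number `μ` is an eigenvalue of the complex matrix `M`. -/
def IsEigenvalueC {n : Type*} [Fintype n] (M : Matrix n n ℂ) (μ : ℂ) : Prop :=
  ∃ v : n → ℂ, v ≠ 0 ∧ M.mulVec v = μ • v

/-- The spectral radius of a real matrix: the maximum of the moduli of the complex
eigenvalues of its complexification. -/
noncomputable def spectralRadius' {n : Type*} [Fintype n] (A : Matrix n n ℝ) : ℝ :=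
  sSup {r : ℝ | ∃ μ : ℂ, IsEigenvalueC (A.map (fun x : ℝ => (x : ℂ))) μ ∧ r = ‖μ‖}

/-- `A` has a Perron eigenvalue: its spectral radius is a nonnegative eigenvalue of `A`. -/
def HasPerronEigenvalue {n : Type*} [Fintype n] (A : Matrix n n ℝ) : Prop :=
  0 ≤ spectralRadius' A ∧ ∃ v : n → ℝ, v ≠ 0 ∧ A.mulVec v = spectralRadius' A • v

/-- The expansion index of a real matrix: the sum, over all (complex) leading eigenvalues
(those of modulus equal to the spectral radius), of their geometric multiplicities. -/
noncomputable def expansionIndex {n : Type*} [Fintype n] [DecidableEq n]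
    (A : Matrix n n ℝ) : ℕ :=
  ∑ μ ∈ (((A.map (fun x : ℝ => (x : ℂ))).charpoly.roots.toFinset).filter
      (fun μ => ‖μ‖ = spectralRadius' A)),
    Module.finrank ℂ
      (LinearMap.ker (Matrix.toLin' ((A.map (fun x : ℝ => (x : ℂ))) - μ • (1 : Matrix n n ℂ))))

/-- A (multiplicative) semigroup of matrices: a nonempty set closed under multiplication. -/
def IsMatrixSemigroup {n : Type*} [Fintype n] (S : Set (Matrix n n ℝ)) : Prop :=
  S.Nonempty ∧ ∀ A ∈ S, ∀ B ∈ S, A * B ∈ S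

/-- An irreducible set of matrices: no common invariant subspace other than `{0}` and the
whole space. -/
def MatIrreducible {n : Type*} [Fintype n] (S : Set (Matrix n n ℝ)) : Prop :=
  ¬ ∃ V : Submodule ℝ (n → ℝ), V ≠ ⊥ ∧ V ≠ ⊤ ∧ ∀ A ∈ S, ∀ x ∈ V, A.mulVec x ∈ V

/-- A proper cone: a closed convex cone with nonempty interior which is pointed. -/
def IsProperCone {n : Type*} [Fintype n] (K : Set (n → ℝ)) : Prop :=
  IsClosed K ∧ (∀ x ∈ K, ∀ y ∈ K, x + y ∈ K) ∧
    (∀ t : ℝ, 0 ≤ t → ∀ x ∈ K, t • x ∈ K) ∧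
    (interior K).Nonempty ∧ (∀ x ∈ K, -x ∈ K → x = 0)

/-- The rotation group `SO(3)`. -/
def SO3 : Set (Matrix (Fin 3) (Fin 3) ℝ) := {U | Uᵀ * U = 1 ∧ U.det = 1}

/-- The semigroup `S_m` of `3m × 3m` matrices: `A ∈ S_m` iff there are a map
`g : {1,…,m} → {1,…,m}` and rotations `U_1, …, U_m ∈ SO(3)` such that, viewing `A` as an
`m × m` array of `3 × 3` blocks, the block in position `(g i, i)` equals `U i` and all
other blocks vanish. -/
def Sm (m : ℕ) : Set (Matrix (Fin m × Fin 3) (Fin m × Fin 3) ℝ) :=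
  {A | ∃ (g : Fin m → Fin m) (U : Fin m → Matrix (Fin 3) (Fin 3) ℝ),
    (∀ i, U i ∈ SO3) ∧
    ∀ (j i : Fin m) (a b : Fin 3), A (j, a) (i, b) = if j = g i then U i a b else 0}


lemma exists_unit_perp (v : Fin 3 → ℝ) :
    ∃ u : Fin 3 → ℝ, u 0 ^ 2 + u 1 ^ 2 + u 2 ^ 2 = 1 ∧
      u 0 * v 0 + u 1 * v 1 + u 2 * v 2 = 0 := by
  by_cases h : v 0 = 0 ∧ v 1 = 0
  · exact ⟨![1, 0, 0], by norm_num; rfl, by simp [h.1]⟩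
  · have hr : 0 < v 0 ^ 2 + v 1 ^ 2 := by
      rcases not_and_or.1 h with h0 | h1
      · positivity
      · positivity
    set r := Real.sqrt (v 0 ^ 2 + v 1 ^ 2) with hrdef
    have hrpos : 0 < r := Real.sqrt_pos.2 hr
    have hr2 : r ^ 2 = v 0 ^ 2 + v 1 ^ 2 := Real.sq_sqrt hr.le
    refine ⟨![v 1 / r, -(v 0) / r, 0], ?_, ?_⟩
    · have : (v 1 / r) ^ 2 + (-(v 0) / r) ^ 2 + 0 ^ 2 = 1 := by
        field_simp
        linarith [hr2]
      simpa using this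
    · show (v 1 / r) * v 0 + (-(v 0) / r) * v 1 + 0 * v 2 = 0
      field_simp
      ring

lemma exists_so3_neg (v : Fin 3 → ℝ) : ∃ U ∈ SO3, U.mulVec v = -v := by
  obtain ⟨u, hu1, hu2⟩ := exists_unit_perp v
  refine ⟨Matrix.of (fun a b => 2 * u a * u b - if a = b then 1 else 0), ⟨?_, ?_⟩, ?_⟩
  · ext i j
    fin_cases i <;> fin_cases j <;>
      simp [Matrix.mul_apply, Fin.sum_univ_three, Matrix.one_apply]
    · linear_combination (4 * u 0 * u 0) * hu1
    · linear_combination (4 * u 0 * u 1) * hu1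
    · linear_combination (4 * u 0 * u 2) * hu1
    · linear_combination (4 * u 1 * u 0) * hu1
    · linear_combination (4 * u 1 * u 1) * hu1
    · linear_combination (4 * u 1 * u 2) * hu1
    · linear_combination (4 * u 2 * u 0) * hu1
    · linear_combination (4 * u 2 * u 1) * hu1
    · linear_combination (4 * u 2 * u 2) * hu1
  · rw [Matrix.det_fin_three]
    simp only [Matrix.of_apply, Fin.isValue, show ((1:Fin 3) = 2) = False by decide,
      show ((2:Fin 3) = 1) = False by decide, show ((0:Fin 3) = 2) = False by decide,
      show ((2:Fin 3) = 0) = False by decide, show ((0:Fin 3) = 1) = False by decide,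
      show ((1:Fin 3) = 0) = False by decide, if_false, if_true, eq_self_iff_true]
    linear_combination 2 * hu1
  · funext a
    fin_cases a <;>
      simp [Matrix.mulVec, dotProduct, Fin.sum_univ_three]
    · linear_combination (2 * u 0) * hu2
    · linear_combination (2 * u 1) * hu2
    · linear_combination (2 * u 2) * hu2

/-- `S_m` has no invariant proper cone. -/
theorem Sm_no_invariant_cone {m : ℕ} (hm : 2 ≤ m) :
    ¬ ∃ K : Set (Fin m × Fin 3 → ℝ), IsProperCone K ∧
        ∀ A ∈ Sm m, ∀ x ∈ K, A.mulVec x ∈ K := by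
  rintro ⟨K, ⟨hclosed, hadd, hsmul, hint, hpointed⟩, hinv⟩
  haveI : NeZero m := ⟨by omega⟩
  -- a nonzero element of K
  have hne : ∃ x ∈ K, x ≠ 0 := by
    obtain ⟨y, hy⟩ := hint
    by_cases hy0 : y = 0
    · subst hy0
      obtain ⟨ε, hε, hball⟩ := Metric.isOpen_iff.1 isOpen_interior 0 hy
      have hKb : Metric.ball (0 : Fin m × Fin 3 → ℝ) ε ⊆ K := hball.trans interior_subset
      set e : Fin m × Fin 3 → ℝ := fun _ => ε / 2 with he
      have hnorm : ‖e‖ = ε / 2 := by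
        rw [he]
        rw [pi_norm_const (ε / 2 : ℝ)]
        simp [abs_of_nonneg hε.le]
      have hem : e ∈ K := hKb (by rw [mem_ball_zero_iff, hnorm]; linarith)
      have henm : -e ∈ K := hKb (by rw [mem_ball_zero_iff, norm_neg, hnorm]; linarith)
      have he0 : e = 0 := hpointed e hem henm
      have : (ε / 2 : ℝ) = 0 := congrFun he0 (0, 0)
      linarith
    · exact ⟨y, interior_subset hy, hy0⟩
  obtain ⟨x, hxK, hx0⟩ := hne
  choose U hUSO3 hUneg using fun i : Fin m => exists_so3_neg (fun b => x (i, b))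
  set A : Matrix (Fin m × Fin 3) (Fin m × Fin 3) ℝ :=
    Matrix.of (fun p q => if p.1 = q.1 then U q.1 p.2 q.2 else 0) with hAdef
  have hA : A ∈ Sm m := ⟨id, U, hUSO3, fun j i a b => by simp [hAdef]⟩
  have hAx : A.mulVec x = -x := by
    funext p
    obtain ⟨j, a⟩ := p
    have h := congrFun (hUneg j) a
    simp only [Matrix.mulVec, dotProduct] at h
    have : A.mulVec x (j, a) = ∑ b, U j a b * x (j, b) := by
      simp only [Matrix.mulVec, dotProduct, hAdef, Matrix.of_apply,
        Fintype.sum_prod_type, ite_mul, zero_mul]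
      rw [Finset.sum_eq_single j (fun i _ hij => by
        refine Finset.sum_eq_zero fun b _ => ?_
        rw [if_neg (Ne.symm hij)]) (by simp)]
      simp
    rw [this, h]
    simp
  have hmem := hinv A hA x hxK
  rw [hAx] at hmem
  exact hx0 (hpointed x hxK hmem)
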